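/- arXiv:math/0607757 — 3 statements merged into one kernel-verified Lean document; each statement's English description precedes it below -/
import Mathlib

section
/- Let Σ = ℕ^ℕ, let σ : Σ → Σ be the one-sided shift, let μ be a σ-invariant ergodic Borel probability measure on Σ, and let Jσ be a Jacobian of μ for σ. Assume the uniform bounded-distortion condition: there is K ≥ 1 such that Jσ^k(c_w x) ≤ K·Jσ^k(c_w y) for every k ≥ 1, every word w of length k, and all x, y ∈ Σ. For k ≥ 0, x ∈ Σ and a Borel set E ⊆ Σ define the backward average μ_{k,x}(E) = Σ_w Jσ^k(c_w x)^{−1}·1_E(c_w x), the sum running over all words w of length k. Then for every x ∈ Σ and every cylinder C = [w₀]: K·μ(C) ≥ limsup_{n→∞} (1/n) Σ_{k=0}^{n−1} μ_{k,x}(C) ≥ liminf_{n→∞} (1/n) Σ_{k=0}^{n−1} μ_{k,x}(C) ≥ (1/K)·μ(C). -/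
open MeasureTheory Filter

/-- The one-sided shift on `Σ = ℕ^ℕ`. -/
def shiftMap : (ℕ → ℕ) → (ℕ → ℕ) := fun x n => x (n + 1)

/-- The cylinder `[w]` of a word `w` of length `k`. -/
def cylinder {k : ℕ} (w : Fin k → ℕ) : Set (ℕ → ℕ) :=
  {x | ∀ j : Fin k, x (j : ℕ) = w j}

/-- The inverse branch `c_w : Σ → [w]` of `σ^k` associated to a word `w` of length `k`. -/
def branch {k : ℕ} (w : Fin k → ℕ) (x : ℕ → ℕ) : ℕ → ℕ :=
  fun j => if h : j < k then w ⟨j, h⟩ else x (j - k)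

/-- `Jσ^n(z) = ∏_{i<n} Jσ(σ^i z)`. -/
def jprod (J : (ℕ → ℕ) → ℝ) (n : ℕ) (z : ℕ → ℕ) : ℝ :=
  ∏ i ∈ Finset.range n, J (shiftMap^[i] z)

/-- The backward average `μ_{k,x}(E) = ∑_w Jσ^k(c_w x)⁻¹ 1_E(c_w x)`, summed over all
words `w` of length `k`. -/
noncomputable def backAvg (J : (ℕ → ℕ) → ℝ) (k : ℕ) (x : ℕ → ℕ) (E : Set (ℕ → ℕ)) : ℝ :=
  ∑' w : Fin k → ℕ, (jprod J k (branch w x))⁻¹ * E.indicator (fun _ => (1 : ℝ)) (branch w x)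

open scoped ENNReal

/-! Auxiliary lemmas -/

lemma measurable_shiftMap : Measurable shiftMap :=
  measurable_pi_lambda _ fun n => measurable_pi_apply (n + 1)

lemma measurable_branch {k : ℕ} (w : Fin k → ℕ) : Measurable (branch w) := by
  refine measurable_pi_lambda _ fun j => ?_
  by_cases h : j < k
  · simpa [branch, h] using measurable_const
  · simpa [branch, h] using measurable_pi_apply (j - k)

lemma measurable_jprod {J : (ℕ → ℕ) → ℝ} (hJ : Measurable J) (k : ℕ) :
    Measurable (jprod J k) := by
  unfold jprod
  exact Finset.measurable_prod _ fun i _ => hJ.comp (measurable_shiftMap.iterate i)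

lemma jprod_pos {J : (ℕ → ℕ) → ℝ} (hJ : ∀ x, 0 < J x) (k : ℕ) (z : ℕ → ℕ) :
    0 < jprod J k z :=
  Finset.prod_pos fun _ _ => hJ _

lemma shift_branch_one (ι : ℕ) (z : ℕ → ℕ) :
    shiftMap (branch (fun _ : Fin 1 => ι) z) = z := by
  funext j
  simp [shiftMap, branch]

lemma branch_one_shift {ι : ℕ} {z : ℕ → ℕ} (h : z 0 = ι) :
    branch (fun _ : Fin 1 => ι) (shiftMap z) = z := by
  funext j
  rcases j with _ | m
  · simpa [branch] using h.symm
  · simp [branch, shiftMap]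

lemma branch_cons {k : ℕ} (ι : ℕ) (w : Fin k → ℕ) (x : ℕ → ℕ) :
    branch (Fin.cons ι w) x = branch (fun _ : Fin 1 => ι) (branch w x) := by
  funext j
  rcases j with _ | m
  · simp [branch]
  · by_cases h : m < k
    · have h1 : m + 1 < k + 1 := by omega
      have h2 : ¬ (m + 1 < 1) := by omega
      have e2 : branch (Fin.cons ι w) x (m + 1) = w ⟨m, h⟩ := by
        unfold branch
        rw [dif_pos h1]
        exact Fin.cons_succ (α := fun _ : Fin (k+1) => ℕ) ι w ⟨m, h⟩
      rw [e2]
      simp only [branch, dif_neg h2, Nat.add_sub_cancel, dif_pos h]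
    · have h1 : ¬ (m + 1 < k + 1) := by omega
      have h2 : ¬ (m + 1 < 1) := by omega
      simp only [branch, dif_neg h, dif_neg h1, dif_neg h2, Nat.add_sub_cancel]
      congr 1
      omega

lemma jprod_succ (J : (ℕ → ℕ) → ℝ) (k : ℕ) (z : ℕ → ℕ) :
    jprod J (k + 1) z = jprod J k (shiftMap z) * J z := by
  unfold jprod
  rw [Finset.prod_range_succ']
  simp [Function.iterate_succ_apply]

/-- ENNReal version of the backward sum, with a general test function. -/
noncomputable def eS (J : (ℕ → ℕ) → ℝ) (k : ℕ) (g : (ℕ → ℕ) → ℝ≥0∞) (x : ℕ → ℕ) : ℝ≥0∞ :=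
  ∑' w : Fin k → ℕ, (ENNReal.ofReal (jprod J k (branch w x)))⁻¹ * g (branch w x)

lemma measurable_eS {J : (ℕ → ℕ) → ℝ} (hJ : Measurable J) (k : ℕ)
    {g : (ℕ → ℕ) → ℝ≥0∞} (hg : Measurable g) : Measurable (eS J k g) := by
  refine Measurable.ennreal_tsum fun w => ?_
  exact ((ENNReal.measurable_ofReal.comp
    ((measurable_jprod hJ k).comp (measurable_branch w))).inv).mul
    (hg.comp (measurable_branch w))

lemma branch_zero (w : Fin 0 → ℕ) (x : ℕ → ℕ) : branch w x = x := by
  funext j; simp [branch]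

lemma eS_zero (J : (ℕ → ℕ) → ℝ) (g : (ℕ → ℕ) → ℝ≥0∞) (x : ℕ → ℕ) :
    eS J 0 g x = g x := by
  unfold eS
  rw [tsum_eq_single (fun i : Fin 0 => i.elim0) (by
    intro b hb; exact absurd (Subsingleton.elim b _) hb)]
  simp [jprod, branch_zero]

lemma jprod_one (J : (ℕ → ℕ) → ℝ) (z : ℕ → ℕ) : jprod J 1 z = J z := by
  simp [jprod]

lemma eS_one (J : (ℕ → ℕ) → ℝ) (g : (ℕ → ℕ) → ℝ≥0∞) (x : ℕ → ℕ) :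
    eS J 1 g x = ∑' ι : ℕ, (ENNReal.ofReal (J (branch (fun _ : Fin 1 => ι) x)))⁻¹ *
      g (branch (fun _ : Fin 1 => ι) x) := by
  unfold eS
  rw [← Equiv.tsum_eq (Equiv.funUnique (Fin 1) ℕ).symm]
  refine tsum_congr fun ι => ?_
  rw [jprod_one]
  rfl

lemma eS_succ {J : (ℕ → ℕ) → ℝ} (hJ : ∀ z, 0 < J z) (k : ℕ)
    (g : (ℕ → ℕ) → ℝ≥0∞) (x : ℕ → ℕ) :
    eS J (k + 1) g x = eS J k (eS J 1 g) x := by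
  have hr : eS J k (eS J 1 g) x = ∑' w : Fin k → ℕ,
      (ENNReal.ofReal (jprod J k (branch w x)))⁻¹ *
        ∑' ι : ℕ, (ENNReal.ofReal (J (branch (fun _ : Fin 1 => ι) (branch w x))))⁻¹ *
          g (branch (fun _ : Fin 1 => ι) (branch w x)) := by
    unfold eS
    exact tsum_congr fun w => by rw [← eS_one]; rfl
  rw [hr]
  unfold eS
  rw [← Equiv.tsum_eq (Fin.consEquiv (fun _ : Fin (k+1) => ℕ)), ENNReal.tsum_prod', ENNReal.tsum_comm]
  refine tsum_congr fun w => ?_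
  rw [← ENNReal.tsum_mul_left]
  refine tsum_congr fun ι => ?_
  have hb : ((Fin.consEquiv (fun _ : Fin (k+1) => ℕ)) (ι, w)) = Fin.cons ι w := rfl
  rw [hb, branch_cons, jprod_succ, shift_branch_one,
    ENNReal.ofReal_mul (jprod_pos hJ k _).le, ENNReal.mul_inv (by
      left; exact (ENNReal.ofReal_pos.mpr (jprod_pos hJ k _)).ne') (by
      left; exact ENNReal.ofReal_ne_top), mul_assoc]

lemma cylinder0_measurable (ι : ℕ) : MeasurableSet {y : ℕ → ℕ | y 0 = ι} := by
  have h : {y : ℕ → ℕ | y 0 = ι} = (fun y : ℕ → ℕ => y 0) ⁻¹' {ι} := rfl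
  rw [h]
  exact measurable_pi_apply 0 (measurableSet_singleton ι)

lemma step_lintegral (μ : Measure (ℕ → ℕ)) {J : (ℕ → ℕ) → ℝ}
    (hJmeas : Measurable J) (hJpos : ∀ z, 0 < J z)
    (hJac : ∀ (ι : ℕ) (B : Set (ℕ → ℕ)), MeasurableSet B →
      μ B = ∫⁻ x in {y : ℕ → ℕ | y 0 = ι} ∩ shiftMap ⁻¹' B, ENNReal.ofReal (J x) ∂μ)
    {g : (ℕ → ℕ) → ℝ≥0∞} (hg : Measurable g) :
    ∫⁻ x, eS J 1 g x ∂μ = ∫⁻ x, g x ∂μ := by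
  have hmb : ∀ ι : ℕ, Measurable fun x =>
      (ENNReal.ofReal (J (branch (fun _ : Fin 1 => ι) x)))⁻¹ *
        g (branch (fun _ : Fin 1 => ι) x) := fun ι =>
    ((ENNReal.measurable_ofReal.comp (hJmeas.comp (measurable_branch _))).inv).mul
      (hg.comp (measurable_branch _))
  calc ∫⁻ x, eS J 1 g x ∂μ
      = ∑' ι : ℕ, ∫⁻ x, (ENNReal.ofReal (J (branch (fun _ : Fin 1 => ι) x)))⁻¹ *
          g (branch (fun _ : Fin 1 => ι) x) ∂μ := by
        rw [← lintegral_tsum (fun ι => (hmb ι).aemeasurable)]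
        exact lintegral_congr fun x => eS_one ..
    _ = ∑' ι : ℕ, ∫⁻ x in {y : ℕ → ℕ | y 0 = ι}, g x ∂μ := by
        refine tsum_congr fun ι => ?_
        set A : Set (ℕ → ℕ) := {y | y 0 = ι} with hA
        have hAm : MeasurableSet A := cylinder0_measurable ι
        set d : (ℕ → ℕ) → ℝ≥0∞ := A.indicator fun z => ENNReal.ofReal (J z) with hd
        have hdm : Measurable d := (ENNReal.measurable_ofReal.comp hJmeas).indicator hAm
        have hmap : (μ.withDensity d).map shiftMap = μ := by
          ext B hB
          rw [Measure.map_apply measurable_shiftMap hB,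
            withDensity_apply _ (measurable_shiftMap hB)]
          calc ∫⁻ z in shiftMap ⁻¹' B, d z ∂μ
              = ∫⁻ z in A ∩ shiftMap ⁻¹' B, ENNReal.ofReal (J z) ∂μ := by
                rw [hd, lintegral_indicator hAm _, Measure.restrict_restrict hAm]
            _ = μ B := (hJac ι B hB).symm
        have h1 : ∫⁻ x, (ENNReal.ofReal (J (branch (fun _ : Fin 1 => ι) x)))⁻¹ *
              g (branch (fun _ : Fin 1 => ι) x) ∂μ
            = ∫⁻ z, d z * ((ENNReal.ofReal (J (branch (fun _ : Fin 1 => ι)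
                (shiftMap z))))⁻¹ * g (branch (fun _ : Fin 1 => ι) (shiftMap z))) ∂μ := by
          have hcomp : Measurable fun a =>
              (ENNReal.ofReal (J (branch (fun _ : Fin 1 => ι) (shiftMap a))))⁻¹ *
                g (branch (fun _ : Fin 1 => ι) (shiftMap a)) :=
            (hmb ι).comp measurable_shiftMap
          conv_lhs => rw [← hmap]
          rw [lintegral_map (hmb ι) measurable_shiftMap,
            lintegral_withDensity_eq_lintegral_mul μ hdm hcomp]
          rfl
        have h2 : ∀ z, d z * ((ENNReal.ofReal (J (branch (fun _ : Fin 1 => ι)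
              (shiftMap z))))⁻¹ * g (branch (fun _ : Fin 1 => ι) (shiftMap z)))
            = A.indicator g z := by
          intro z
          by_cases hz : z ∈ A
          · have hz0 : z 0 = ι := hz
            rw [hd, Set.indicator_of_mem hz, Set.indicator_of_mem hz, branch_one_shift hz0,
              ← mul_assoc, ENNReal.mul_inv_cancel
                (ENNReal.ofReal_pos.mpr (hJpos z)).ne' ENNReal.ofReal_ne_top, one_mul]
          · rw [hd, Set.indicator_of_notMem hz, Set.indicator_of_notMem hz, zero_mul]
        rw [h1, lintegral_congr h2, lintegral_indicator hAm _]
    _ = ∫⁻ x, g x ∂μ := by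
        rw [← lintegral_iUnion (fun ι => cylinder0_measurable ι) ?_ g]
        · congr 1
          rw [show (⋃ ι : ℕ, {y : ℕ → ℕ | y 0 = ι}) = Set.univ from by ext y; simp,
            Measure.restrict_univ]
        · intro i j hij
          refine Set.disjoint_left.mpr fun y hy hy2 => ?_
          exact hij (by rw [← hy, ← hy2])

lemma eS_lintegral (μ : Measure (ℕ → ℕ)) {J : (ℕ → ℕ) → ℝ}
    (hJmeas : Measurable J) (hJpos : ∀ z, 0 < J z)
    (hJac : ∀ (ι : ℕ) (B : Set (ℕ → ℕ)), MeasurableSet B →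
      μ B = ∫⁻ x in {y : ℕ → ℕ | y 0 = ι} ∩ shiftMap ⁻¹' B, ENNReal.ofReal (J x) ∂μ)
    (k : ℕ) {g : (ℕ → ℕ) → ℝ≥0∞} (hg : Measurable g) :
    ∫⁻ x, eS J k g x ∂μ = ∫⁻ x, g x ∂μ := by
  induction k generalizing g with
  | zero => exact lintegral_congr fun x => eS_zero ..
  | succ k ih =>
      have h1 : ∫⁻ x, eS J (k + 1) g x ∂μ = ∫⁻ x, eS J k (eS J 1 g) x ∂μ :=
        lintegral_congr fun x => eS_succ hJpos k g x
      rw [h1, ih (measurable_eS hJmeas 1 hg)]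
      exact step_lintegral μ hJmeas hJpos hJac hg

lemma inv_le_K_mul_inv {K px py : ℝ} (hpx : 0 < px) (hpy : 0 < py) (hd : py ≤ K * px) :
    px⁻¹ ≤ K * py⁻¹ := by
  have h := mul_le_mul_of_nonneg_left hd (mul_pos (inv_pos.mpr hpx) (inv_pos.mpr hpy)).le
  have e1 : px⁻¹ * py⁻¹ * py = px⁻¹ := by
    field_simp
  have e2 : px⁻¹ * py⁻¹ * (K * px) = K * py⁻¹ := by
    field_simp
  rw [e1, e2] at h
  exact h

lemma eS_le_of_branch_eq {J : (ℕ → ℕ) → ℝ} (hJpos : ∀ z, 0 < J z) {K : ℝ}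
    (hdist : ∀ k : ℕ, 1 ≤ k → ∀ w : Fin k → ℕ, ∀ x y : ℕ → ℕ,
      jprod J k (branch w x) ≤ K * jprod J k (branch w y))
    (hK : 1 ≤ K) (k : ℕ) (hk : 1 ≤ k) {g : (ℕ → ℕ) → ℝ≥0∞} (x y : ℕ → ℕ)
    (hgxy : ∀ w : Fin k → ℕ, g (branch w x) = g (branch w y)) :
    eS J k g x ≤ ENNReal.ofReal K * eS J k g y := by
  unfold eS
  rw [← ENNReal.tsum_mul_left]
  refine ENNReal.tsum_le_tsum fun w => ?_
  rw [hgxy w, ← mul_assoc]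
  refine mul_le_mul_left ?_ _
  have hpx := jprod_pos hJpos k (branch w x)
  have hpy := jprod_pos hJpos k (branch w y)
  have hreal : (jprod J k (branch w x))⁻¹ ≤ K * (jprod J k (branch w y))⁻¹ :=
    inv_le_K_mul_inv hpx hpy (hdist k hk w y x)
  calc (ENNReal.ofReal (jprod J k (branch w x)))⁻¹
      = ENNReal.ofReal (jprod J k (branch w x))⁻¹ := (ENNReal.ofReal_inv_of_pos hpx).symm
    _ ≤ ENNReal.ofReal (K * (jprod J k (branch w y))⁻¹) := ENNReal.ofReal_le_ofReal hreal
    _ = ENNReal.ofReal K * (ENNReal.ofReal (jprod J k (branch w y)))⁻¹ := by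
        rw [ENNReal.ofReal_mul (by linarith), ENNReal.ofReal_inv_of_pos hpy]

lemma eS_mono_g {J : (ℕ → ℕ) → ℝ} (k : ℕ) {g g' : (ℕ → ℕ) → ℝ≥0∞}
    (h : ∀ z, g z ≤ g' z) (x : ℕ → ℕ) : eS J k g x ≤ eS J k g' x :=
  ENNReal.tsum_le_tsum fun w => mul_le_mul_right (h _) _

lemma backAvg_eq_toReal {J : (ℕ → ℕ) → ℝ} (hJpos : ∀ z, 0 < J z) (k : ℕ) (x : ℕ → ℕ)
    (E : Set (ℕ → ℕ)) :
    backAvg J k x E = (eS J k (E.indicator fun _ => (1 : ℝ≥0∞)) x).toReal := by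
  unfold backAvg eS
  rw [ENNReal.tsum_toReal_eq (fun w => ENNReal.mul_ne_top
    (ENNReal.inv_ne_top.mpr (ENNReal.ofReal_pos.mpr (jprod_pos hJpos k _)).ne')
    (by by_cases h : branch w x ∈ E <;> simp [Set.indicator, h]))]
  refine tsum_congr fun w => ?_
  rw [ENNReal.toReal_mul, ENNReal.toReal_inv, ENNReal.toReal_ofReal (jprod_pos hJpos k _).le]
  congr 1
  by_cases h : branch w x ∈ E <;> simp [Set.indicator, h]

lemma cesaro_bounds (b : ℕ → ℝ) (K r : ℝ) (hK : 1 ≤ K) (hr : 0 ≤ r) (m₀ : ℕ)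
    (hm1 : 1 ≤ m₀) (hb0 : ∀ k, 0 ≤ b k) (hbK : ∀ k, b k ≤ K)
    (hhi : ∀ k, m₀ ≤ k → b k ≤ K * r) (hlo : ∀ k, m₀ ≤ k → K⁻¹ * r ≤ b k) :
    limsup (fun n : ℕ => (1 / (n : ℝ)) * ∑ k ∈ Finset.range n, b k) atTop ≤ K * r ∧
      liminf (fun n : ℕ => (1 / (n : ℝ)) * ∑ k ∈ Finset.range n, b k) atTop
        ≤ limsup (fun n : ℕ => (1 / (n : ℝ)) * ∑ k ∈ Finset.range n, b k) atTop ∧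
      K⁻¹ * r ≤ liminf (fun n : ℕ => (1 / (n : ℝ)) * ∑ k ∈ Finset.range n, b k) atTop := by
  set a : ℕ → ℝ := fun n => (1 / (n : ℝ)) * ∑ k ∈ Finset.range n, b k with ha
  have hK0 : (0:ℝ) < K := by linarith
  have ha0 : ∀ n, 0 ≤ a n := fun n =>
    mul_nonneg (by positivity) (Finset.sum_nonneg fun k _ => hb0 k)
  have haK : ∀ n, a n ≤ K := by
    intro n
    rcases Nat.eq_zero_or_pos n with h | h
    · simp [ha, h]; linarith
    · have hn : (0:ℝ) < n := by exact_mod_cast h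
      have hs : ∑ k ∈ Finset.range n, b k ≤ (n:ℝ) * K := by
        calc ∑ k ∈ Finset.range n, b k ≤ ∑ k ∈ Finset.range n, K :=
            Finset.sum_le_sum fun k _ => hbK k
          _ = (n:ℝ) * K := by rw [Finset.sum_const, Finset.card_range, nsmul_eq_mul]
      calc a n ≤ (1 / (n:ℝ)) * ((n:ℝ) * K) :=
            mul_le_mul_of_nonneg_left hs (by positivity)
        _ = K := by field_simp
  have hub : ∀ n, a n ≤ K * r + ((m₀:ℝ) * K) * (1 / (n:ℝ)) := by
    intro n
    rcases Nat.eq_zero_or_pos n with h | h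
    · have h0 : a 0 = 0 := by simp [ha]
      rw [h]
      rw [h0]
      have : (0:ℝ) ≤ K * r := by positivity
      simp
      positivity
    · have hn : (0:ℝ) < n := by exact_mod_cast h
      have hterm : ∀ k ∈ Finset.range n, b k ≤ K * r + (if k < m₀ then K else 0) := by
        intro k _
        by_cases hkm : k < m₀
        · simp only [if_pos hkm]
          have h1 : 0 ≤ K * r := by positivity
          linarith [hbK k]
        · simp only [if_neg hkm, add_zero]
          exact hhi k (le_of_not_gt hkm)
      have hite : ∑ k ∈ Finset.range n, (if k < m₀ then K else 0) ≤ (m₀:ℝ) * K := by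
        by_cases hnm : n ≤ m₀
        · calc ∑ k ∈ Finset.range n, (if k < m₀ then K else 0)
              ≤ ∑ _k ∈ Finset.range n, K := Finset.sum_le_sum fun k _ => by
                split
                · exact le_refl K
                · linarith
            _ = (n:ℝ) * K := by rw [Finset.sum_const, Finset.card_range, nsmul_eq_mul]
            _ ≤ (m₀:ℝ) * K := by
                have hcast : (n:ℝ) ≤ (m₀:ℝ) := by exact_mod_cast hnm
                nlinarith
        · have hsub : Finset.range m₀ ⊆ Finset.range n :=
            Finset.range_subset_range.mpr (le_of_lt (not_le.mp hnm))
          have he : ∑ k ∈ Finset.range m₀, (if k < m₀ then K else 0) = (m₀:ℝ) * K := by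
            calc ∑ k ∈ Finset.range m₀, (if k < m₀ then K else 0)
                = ∑ k ∈ Finset.range m₀, K :=
                  Finset.sum_congr rfl fun k hk => if_pos (Finset.mem_range.mp hk)
              _ = (m₀:ℝ) * K := by rw [Finset.sum_const, Finset.card_range, nsmul_eq_mul]
          rw [← Finset.sum_subset hsub (fun k _ hk => by
            rw [if_neg (by simpa using hk)])]
          exact le_of_eq he
      have hsum : ∑ k ∈ Finset.range n, b k ≤ (n:ℝ) * (K * r) + (m₀:ℝ) * K := by
        calc ∑ k ∈ Finset.range n, b k
            ≤ ∑ k ∈ Finset.range n, (K * r + (if k < m₀ then K else 0)) :=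
              Finset.sum_le_sum hterm
          _ = (n:ℝ) * (K * r) + ∑ k ∈ Finset.range n, (if k < m₀ then K else 0) := by
              rw [Finset.sum_add_distrib, Finset.sum_const, Finset.card_range, nsmul_eq_mul]
          _ ≤ (n:ℝ) * (K * r) + (m₀:ℝ) * K := by linarith
      calc a n ≤ (1 / (n:ℝ)) * ((n:ℝ) * (K * r) + (m₀:ℝ) * K) :=
            mul_le_mul_of_nonneg_left hsum (by positivity)
        _ = K * r + ((m₀:ℝ) * K) * (1 / (n:ℝ)) := by field_simp
  have hlb : ∀ n, m₀ ≤ n → K⁻¹ * r - ((m₀:ℝ) * (K⁻¹ * r)) * (1 / (n:ℝ)) ≤ a n := by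
    intro n hn
    have hn1 : 1 ≤ n := le_trans hm1 hn
    have hn0 : (0:ℝ) < n := by exact_mod_cast hn1
    have hsumlb : ((n:ℝ) - (m₀:ℝ)) * (K⁻¹ * r) ≤ ∑ k ∈ Finset.range n, b k := by
      have h1 : ∑ k ∈ Finset.Ico m₀ n, b k ≤ ∑ k ∈ Finset.range n, b k := by
        apply Finset.sum_le_sum_of_subset_of_nonneg
        · rw [Finset.range_eq_Ico]
          exact Finset.Ico_subset_Ico (Nat.zero_le _) le_rfl
        · intro k _ _
          exact hb0 k
      have h2 : ((n - m₀ : ℕ) : ℝ) * (K⁻¹ * r) ≤ ∑ k ∈ Finset.Ico m₀ n, b k := by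
        have h3 := Finset.card_nsmul_le_sum (Finset.Ico m₀ n) b (K⁻¹ * r)
          (fun k hk => hlo k (Finset.mem_Ico.mp hk).1)
        rwa [Nat.card_Ico, nsmul_eq_mul] at h3
      have h4 : ((n - m₀ : ℕ) : ℝ) = (n:ℝ) - (m₀:ℝ) := by
        rw [Nat.cast_sub hn]
      rw [h4] at h2
      linarith
    calc K⁻¹ * r - ((m₀:ℝ) * (K⁻¹ * r)) * (1 / (n:ℝ))
        = (1 / (n:ℝ)) * (((n:ℝ) - (m₀:ℝ)) * (K⁻¹ * r)) := by field_simp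
      _ ≤ a n := mul_le_mul_of_nonneg_left hsumlb (by positivity)
  have hbd_le : IsBoundedUnder (· ≤ ·) atTop a := isBoundedUnder_of ⟨K, fun n => haK n⟩
  have hbd_ge : IsBoundedUnder (· ≥ ·) atTop a := isBoundedUnder_of ⟨0, fun n => ha0 n⟩
  have hcb_le : IsCoboundedUnder (· ≤ ·) atTop a := hbd_ge.isCoboundedUnder_le
  have hcb_ge : IsCoboundedUnder (· ≥ ·) atTop a := hbd_le.isCoboundedUnder_ge
  have hc : Tendsto (fun n : ℕ => K * r + ((m₀:ℝ) * K) * (1 / (n:ℝ))) atTop (nhds (K * r)) := by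
    have h1 := tendsto_one_div_atTop_nhds_zero_nat (𝕜 := ℝ)
    have h2 := (tendsto_const_nhds (x := (m₀:ℝ) * K) (f := atTop)).mul h1
    simpa using (tendsto_const_nhds (x := K * r) (f := atTop)).add h2
  have hd : Tendsto (fun n : ℕ => K⁻¹ * r - ((m₀:ℝ) * (K⁻¹ * r)) * (1 / (n:ℝ))) atTop
      (nhds (K⁻¹ * r)) := by
    have h1 := tendsto_one_div_atTop_nhds_zero_nat (𝕜 := ℝ)
    have h2 := (tendsto_const_nhds (x := (m₀:ℝ) * (K⁻¹ * r)) (f := atTop)).mul h1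
    simpa using (tendsto_const_nhds (x := K⁻¹ * r) (f := atTop)).sub h2
  refine ⟨?_, liminf_le_limsup hbd_le hbd_ge, ?_⟩
  · calc limsup a atTop ≤ limsup (fun n : ℕ => K * r + ((m₀:ℝ) * K) * (1 / (n:ℝ))) atTop :=
        limsup_le_limsup (Eventually.of_forall hub) hcb_le hc.isBoundedUnder_le
      _ = K * r := hc.limsup_eq
  · calc K⁻¹ * r
        = liminf (fun n : ℕ => K⁻¹ * r - ((m₀:ℝ) * (K⁻¹ * r)) * (1 / (n:ℝ))) atTop :=
          hd.liminf_eq.symm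
      _ ≤ liminf a atTop :=
          liminf_le_liminf (eventually_atTop.mpr ⟨m₀, hlb⟩) hd.isBoundedUnder_ge hcb_ge

/-- **Lemma 2.12.** For a shift-invariant ergodic probability `μ` on `ℕ^ℕ` with a Jacobian
`Jσ` satisfying uniform bounded distortion with constant `K`, for *every* point `x` and
every cylinder `C`:
`K μ(C) ≥ limsup (1/n) ∑_{k<n} μ_{k,x}(C) ≥ liminf (1/n) ∑_{k<n} μ_{k,x}(C) ≥ K⁻¹ μ(C)`. -/
theorem stmt10 (μ : Measure (ℕ → ℕ)) [IsProbabilityMeasure μ]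
    (herg : Ergodic shiftMap μ)
    (J : (ℕ → ℕ) → ℝ) (hJmeas : Measurable J) (hJpos : ∀ x, 0 < J x)
    (hJac : ∀ (ι : ℕ) (B : Set (ℕ → ℕ)), MeasurableSet B →
      μ B = ∫⁻ x in {y : ℕ → ℕ | y 0 = ι} ∩ shiftMap ⁻¹' B, ENNReal.ofReal (J x) ∂μ)
    (K : ℝ) (hK : 1 ≤ K)
    (hdist : ∀ k : ℕ, 1 ≤ k → ∀ w : Fin k → ℕ, ∀ x y : ℕ → ℕ,
      jprod J k (branch w x) ≤ K * jprod J k (branch w y)) :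
    ∀ (x : ℕ → ℕ) (k₀ : ℕ) (w₀ : Fin k₀ → ℕ),
      limsup (fun n : ℕ =>
          (1 / (n : ℝ)) * ∑ k ∈ Finset.range n, backAvg J k x (cylinder w₀)) atTop
        ≤ K * (μ (cylinder w₀)).toReal ∧
      liminf (fun n : ℕ =>
          (1 / (n : ℝ)) * ∑ k ∈ Finset.range n, backAvg J k x (cylinder w₀)) atTop
        ≤ limsup (fun n : ℕ =>
          (1 / (n : ℝ)) * ∑ k ∈ Finset.range n, backAvg J k x (cylinder w₀)) atTop ∧
      K⁻¹ * (μ (cylinder w₀)).toReal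
        ≤ liminf (fun n : ℕ =>
          (1 / (n : ℝ)) * ∑ k ∈ Finset.range n, backAvg J k x (cylinder w₀)) atTop := by
  intro x k₀ w₀
  have hK0 : (0:ℝ) < K := by linarith
  set C : Set (ℕ → ℕ) := cylinder w₀ with hCdef
  have hC : MeasurableSet C := by
    have h : C = ⋂ j : Fin k₀, (fun y : ℕ → ℕ => y (j : ℕ)) ⁻¹' {w₀ j} := by
      ext y
      simp [hCdef, _root_.cylinder, Set.mem_iInter]
    rw [h]
    exact MeasurableSet.iInter fun j => measurable_pi_apply _ (measurableSet_singleton _)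
  set gC : (ℕ → ℕ) → ℝ≥0∞ := C.indicator fun _ => 1 with hgCdef
  have hgC : Measurable gC := measurable_const.indicator hC
  have hint : ∀ k, ∫⁻ y, eS J k gC y ∂μ = μ C := by
    intro k
    rw [eS_lintegral μ hJmeas hJpos hJac k hgC]
    exact lintegral_indicator_one hC
  set m₀ : ℕ := max 1 k₀ with hm₀
  have hm1 : 1 ≤ m₀ := le_max_left _ _
  have hmemiff : ∀ k, m₀ ≤ k → ∀ (w : Fin k → ℕ) (z z' : ℕ → ℕ),
      (branch w z ∈ C ↔ branch w z' ∈ C) := by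
    intro k hk w z z'
    have hkk : k₀ ≤ k := le_trans (le_max_right 1 k₀) hk
    have key : ∀ z : ℕ → ℕ, branch w z ∈ C ↔
        ∀ j : Fin k₀, w ⟨(j : ℕ), lt_of_lt_of_le j.2 hkk⟩ = w₀ j := by
      intro z
      constructor
      · intro hz j
        have h1 := hz j
        rwa [show branch w z (j : ℕ) = w ⟨(j : ℕ), lt_of_lt_of_le j.2 hkk⟩ from
          dif_pos _] at h1
      · intro hz j
        rw [show branch w z (j : ℕ) = w ⟨(j : ℕ), lt_of_lt_of_le j.2 hkk⟩ from dif_pos _]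
        exact hz j
    rw [key z, key z']
  have hgxy : ∀ k, m₀ ≤ k → ∀ (z z' : ℕ → ℕ) (w : Fin k → ℕ),
      gC (branch w z) = gC (branch w z') := by
    intro k hk z z' w
    by_cases h : branch w z ∈ C
    · rw [hgCdef, Set.indicator_of_mem h, Set.indicator_of_mem ((hmemiff k hk w z z').mp h)]
    · rw [hgCdef, Set.indicator_of_notMem h,
        Set.indicator_of_notMem (fun hc => h ((hmemiff k hk w z' z).mp hc))]
  have hmeasS : ∀ k, Measurable (eS J k gC) := fun k => measurable_eS hJmeas k hgC
  have hup : ∀ k, m₀ ≤ k → eS J k gC x ≤ ENNReal.ofReal K * μ C := by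
    intro k hk
    have hk1 : 1 ≤ k := le_trans hm1 hk
    calc eS J k gC x = ∫⁻ _, eS J k gC x ∂μ := by
          rw [lintegral_const, measure_univ, mul_one]
      _ ≤ ∫⁻ y, ENNReal.ofReal K * eS J k gC y ∂μ :=
          lintegral_mono fun y => eS_le_of_branch_eq hJpos hdist hK k hk1 x y (hgxy k hk x y)
      _ = ENNReal.ofReal K * μ C := by
          rw [lintegral_const_mul _ (hmeasS k), hint k]
  have hlow : ∀ k, m₀ ≤ k → μ C ≤ ENNReal.ofReal K * eS J k gC x := by
    intro k hk
    have hk1 : 1 ≤ k := le_trans hm1 hk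
    calc μ C = ∫⁻ y, eS J k gC y ∂μ := (hint k).symm
      _ ≤ ∫⁻ _, ENNReal.ofReal K * eS J k gC x ∂μ :=
          lintegral_mono fun y => eS_le_of_branch_eq hJpos hdist hK k hk1 y x (hgxy k hk y x)
      _ = ENNReal.ofReal K * eS J k gC x := by rw [lintegral_const, measure_univ, mul_one]
  have huniv : ∀ k, 1 ≤ k → eS J k (fun _ => (1 : ℝ≥0∞)) x ≤ ENNReal.ofReal K := by
    intro k hk
    calc eS J k (fun _ => (1 : ℝ≥0∞)) x = ∫⁻ _, eS J k (fun _ => (1 : ℝ≥0∞)) x ∂μ := by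
          rw [lintegral_const, measure_univ, mul_one]
      _ ≤ ∫⁻ y, ENNReal.ofReal K * eS J k (fun _ => (1 : ℝ≥0∞)) y ∂μ :=
          lintegral_mono fun y =>
            eS_le_of_branch_eq hJpos hdist hK k hk x y (fun _ => rfl)
      _ = ENNReal.ofReal K := by
          rw [lintegral_const_mul _ (measurable_eS hJmeas k measurable_const),
            eS_lintegral μ hJmeas hJpos hJac k measurable_const, lintegral_one,
            measure_univ, mul_one]
  have hfinC : ∀ k, 1 ≤ k → eS J k gC x ≤ ENNReal.ofReal K := by
    intro k hk
    refine le_trans (eS_mono_g k (fun z => ?_) x) (huniv k hk)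
    by_cases h : z ∈ C <;> simp [hgCdef, Set.indicator, h]
  have hr0 : 0 ≤ (μ C).toReal := ENNReal.toReal_nonneg
  have hbeq : ∀ k, backAvg J k x C = (eS J k gC x).toReal := fun k =>
    backAvg_eq_toReal hJpos k x C
  have hb0 : ∀ k, 0 ≤ backAvg J k x C := fun k => by
    rw [hbeq k]; exact ENNReal.toReal_nonneg
  have hbK : ∀ k, backAvg J k x C ≤ K := by
    intro k
    rcases Nat.eq_zero_or_pos k with h | h
    · subst h
      rw [hbeq 0, eS_zero]
      have h1 : (gC x).toReal ≤ 1 := by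
        by_cases h : x ∈ C <;> simp [hgCdef, Set.indicator, h]
      linarith
    · rw [hbeq k]
      exact ENNReal.toReal_le_of_le_ofReal (by linarith) (hfinC k h)
  have hhi : ∀ k, m₀ ≤ k → backAvg J k x C ≤ K * (μ C).toReal := by
    intro k hk
    rw [hbeq k]
    have h1 := ENNReal.toReal_mono
      (ENNReal.mul_ne_top ENNReal.ofReal_ne_top (measure_ne_top μ C)) (hup k hk)
    rwa [ENNReal.toReal_mul, ENNReal.toReal_ofReal (by linarith)] at h1
  have hlo : ∀ k, m₀ ≤ k → K⁻¹ * (μ C).toReal ≤ backAvg J k x C := by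
    intro k hk
    have hfin : eS J k gC x ≠ ⊤ :=
      (lt_of_le_of_lt (hfinC k (le_trans hm1 hk)) ENNReal.ofReal_lt_top).ne
    have h1 := ENNReal.toReal_mono (ENNReal.mul_ne_top ENNReal.ofReal_ne_top hfin) (hlow k hk)
    rw [ENNReal.toReal_mul, ENNReal.toReal_ofReal (by linarith), ← hbeq k] at h1
    calc K⁻¹ * (μ C).toReal ≤ K⁻¹ * (K * backAvg J k x C) :=
          mul_le_mul_of_nonneg_left h1 (by positivity)
      _ = backAvg J k x C := by field_simp
  exact cesaro_bounds (fun k => backAvg J k x C) K (μ C).toReal hK hr0 m₀ hm1 hb0 hbK hhi hlo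
end

section
/- Let (X, 𝒜, μ) be a probability space, let f : X → X be measure-preserving and ergodic, and let Γ ∈ 𝒜 with μ(Γ) > 0. For x ∈ Γ let r(x) = min{n ≥ 1 : f^n(x) ∈ Γ} (finite for μ-almost every x ∈ Γ by Poincaré recurrence) and g(x) = f^{r(x)}(x). Let d ≥ 1 and let A : X → GL(d,ℂ) be any map; write A^m(x) = A(f^{m−1}(x)) ⋯ A(x), B(x) = A^{r(x)}(x) for x ∈ Γ, and B^n(x) = B(g^{n−1}(x)) ⋯ B(x). Then for μ-almost every x ∈ Γ, all iterates g^j(x) (j ≥ 0) lie in Γ with finite return time, and for every v ∈ ℂ^d ∖ {0} and every χ ∈ ℝ: if lim_{m→∞} (1/m)·log‖A^m(x)v‖ = χ, then lim_{n→∞} (1/n)·log‖B^n(x)v‖ = χ/μ(Γ). -/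
open MeasureTheory Filter

/-- The first return time of `x` to `Γ` under `f` (`0` if `x` never returns). -/
noncomputable def retTime {X : Type} (f : X → X) (Γ : Set X) (x : X) : ℕ :=
  sInf {n : ℕ | 1 ≤ n ∧ f^[n] x ∈ Γ}

/-- The first return map `g(x) = f^{r(x)}(x)`. -/
noncomputable def retMap {X : Type} (f : X → X) (Γ : Set X) (x : X) : X :=
  f^[retTime f Γ x] x

/-- The cocycle products `A^m(x) = A(f^{m-1}(x)) ⋯ A(f(x)) A(x)`. -/
def matCoc {X : Type} {d : ℕ} (f : X → X) (A : X → Matrix.GeneralLinearGroup (Fin d) ℂ) :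
    ℕ → X → Matrix.GeneralLinearGroup (Fin d) ℂ
  | 0, _ => 1
  | n + 1, x => matCoc f A n (f x) * A x

/-- The cocycle `B` induced over the first return map: `B(x) = A^{r(x)}(x)`, iterated. -/
noncomputable def indCoc {X : Type} {d : ℕ} (f : X → X) (Γ : Set X)
    (A : X → Matrix.GeneralLinearGroup (Fin d) ℂ) :
    ℕ → X → Matrix.GeneralLinearGroup (Fin d) ℂ :=
  matCoc (retMap f Γ) (fun x => matCoc f A (retTime f Γ x) x)


section AUX
open Set


section Maximal

variable {X : Type} [MeasurableSpace X] {μ : Measure X} [IsProbabilityMeasure μ]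
  {f : X → X} {φ : X → ℝ}

/-- `maxS f φ N x = max (0, S₁ x, ..., S_N x)` where `S_k = birkhoffSum f φ k`. -/
noncomputable def maxS (f : X → X) (φ : X → ℝ) : ℕ → X → ℝ
  | 0 => fun _ => 0
  | (N+1) => fun x => max (maxS f φ N x) (birkhoffSum f φ (N+1) x)

lemma maxS_nonneg (N : ℕ) (x : X) : 0 ≤ maxS f φ N x := by
  induction N with
  | zero => simp [maxS]
  | succ N ih => exact le_trans ih (le_max_left _ _)

lemma maxS_mono (x : X) : Monotone (fun N => maxS f φ N x) := by
  refine monotone_nat_of_le_succ fun N => ?_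
  exact le_max_left _ _

lemma birkhoffSum_le_maxS {N : ℕ} (hN : 1 ≤ N) (x : X) :
    birkhoffSum f φ N x ≤ maxS f φ N x := by
  obtain ⟨M, rfl⟩ := Nat.exists_eq_succ_of_ne_zero (Nat.one_le_iff_ne_zero.1 hN)
  exact le_max_right _ _

lemma maxS_pos_iff {N : ℕ} {x : X} :
    0 < maxS f φ N x ↔ ∃ k, 1 ≤ k ∧ k ≤ N ∧ 0 < birkhoffSum f φ k x := by
  constructor
  · intro h
    induction N with
    | zero => simp [maxS] at h
    | succ N ih =>
      rcases lt_or_ge 0 (maxS f φ N x) with h' | h'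
      · obtain ⟨k, hk1, hk2, hk3⟩ := ih h'
        exact ⟨k, hk1, hk2.trans (Nat.le_succ N), hk3⟩
      · have h2 : 0 < birkhoffSum f φ (N+1) x := by
          have hm : 0 < max (maxS f φ N x) (birkhoffSum f φ (N+1) x) := h
          rcases lt_max_iff.1 hm with hh | hh
          · exact absurd hh (not_lt.2 h')
          · exact hh
        exact ⟨N+1, Nat.succ_le_succ (Nat.zero_le N), le_refl _, h2⟩
  · rintro ⟨k, hk1, hk2, hk3⟩
    calc (0:ℝ) < birkhoffSum f φ k x := hk3
    _ ≤ maxS f φ k x := birkhoffSum_le_maxS hk1 x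
    _ ≤ maxS f φ N x := maxS_mono x hk2

lemma maxS_key (N : ℕ) (x : X) (h : 0 < maxS f φ N x) :
    maxS f φ N x ≤ φ x + maxS f φ N (f x) := by
  induction N with
  | zero => simp [maxS] at h
  | succ N ih =>
    have hS : birkhoffSum f φ (N+1) x ≤ φ x + maxS f φ (N+1) (f x) := by
      rw [birkhoffSum_succ']
      gcongr
      rcases Nat.eq_zero_or_pos N with rfl | hN
      · simpa [birkhoffSum] using maxS_nonneg 1 (f x)
      · exact (birkhoffSum_le_maxS hN (f x)).trans (maxS_mono (f x) (Nat.le_succ N))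
    show max (maxS f φ N x) (birkhoffSum f φ (N+1) x) ≤ _
    rcases le_or_gt (maxS f φ N x) 0 with h' | h'
    · have h2 : 0 < birkhoffSum f φ (N+1) x := by
        have hm : 0 < max (maxS f φ N x) (birkhoffSum f φ (N+1) x) := h
        rcases lt_max_iff.1 hm with hh | hh
        · exact absurd hh (not_lt.2 h')
        · exact hh
      exact max_le ((h'.trans (le_of_lt h2)).trans hS) hS
    · refine max_le ((ih h').trans ?_) hS
      gcongr
      exact maxS_mono (f x) (Nat.le_succ N)

lemma maxS_measurable (hf : Measurable f) (hφ : Measurable φ) (N : ℕ) :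
    Measurable (maxS f φ N) := by
  induction N with
  | zero => exact measurable_const
  | succ N ih =>
    refine Measurable.max ih ?_
    apply Finset.measurable_sum
    intro k _
    exact hφ.comp (hf.iterate k)

lemma maxS_bound {C : ℝ} (hC : ∀ x, |φ x| ≤ C) (N : ℕ) (x : X) : |maxS f φ N x| ≤ N * C := by
  have hC0 : 0 ≤ C := le_trans (abs_nonneg _) (hC x)
  induction N with
  | zero => simp [maxS]
  | succ N ih =>
    rw [abs_le] at *
    constructor
    · refine le_trans ?_ (maxS_nonneg (N+1) x)
      have : (0:ℝ) ≤ (N+1 : ℕ) * C := by positivity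
      linarith
    · refine max_le ?_ ?_
      · calc maxS f φ N x ≤ N * C := ih.2
        _ ≤ (N+1:ℕ) * C := by push_cast; nlinarith
      · calc birkhoffSum f φ (N+1) x ≤ ∑ k ∈ Finset.range (N+1), |φ (f^[k] x)|  := by
              exact Finset.sum_le_sum (fun k _ => le_abs_self _)
          _ ≤ ∑ k ∈ Finset.range (N+1), C := Finset.sum_le_sum (fun k _ => hC _)
          _ = (N+1:ℕ) * C := by simp [mul_comm]

/-- Garsia's maximal ergodic theorem, bounded version. -/
lemma maximal_ergodic (hf : MeasurePreserving f μ μ) (hφ : Measurable φ)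
    {C : ℝ} (hC : ∀ x, |φ x| ≤ C) :
    0 ≤ ∫ x in {x | ∃ n, 1 ≤ n ∧ 0 < birkhoffSum f φ n x}, φ x ∂μ := by
  have hint : Integrable φ μ :=
    (integrable_const C).mono' hφ.aestronglyMeasurable (Eventually.of_forall hC)
  have hSmeas : ∀ n : ℕ, Measurable (birkhoffSum f φ n) := fun n =>
    Finset.measurable_sum _ (fun k _ => hφ.comp (hf.measurable.iterate k))
  have hMmeas := maxS_measurable hf.measurable hφ
  have hMint : ∀ N, Integrable (maxS f φ N) μ := fun N =>
    (integrable_const ((N:ℝ) * C)).mono' (hMmeas N).aestronglyMeasurable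
      (Eventually.of_forall (maxS_bound hC N))
  set E : ℕ → Set X := fun N => {x | 0 < maxS f φ N x} with hE
  have hEmeas : ∀ N, MeasurableSet (E N) := fun N => measurableSet_lt measurable_const (hMmeas N)
  have hEmono : Monotone E := fun a b hab x hx => lt_of_lt_of_le hx (maxS_mono x hab)
  have hUnion : (⋃ N, E N) = {x | ∃ n, 1 ≤ n ∧ 0 < birkhoffSum f φ n x} := by
    ext x
    simp only [mem_iUnion, mem_setOf_eq, hE, maxS_pos_iff]
    exact ⟨fun ⟨N, k, h1, _, h3⟩ => ⟨k, h1, h3⟩, fun ⟨k, h1, h3⟩ => ⟨k, k, h1, le_refl k, h3⟩⟩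
  -- key step: for each N, 0 ≤ ∫ x in E N, φ
  have hkey : ∀ N, 0 ≤ ∫ x in E N, φ x ∂μ := by
    intro N
    have hMf_int : Integrable (fun x => maxS f φ N (f x)) μ := by
      refine (integrable_const ((N:ℝ) * C)).mono'
        ((hMmeas N).comp hf.measurable).aestronglyMeasurable
        (Eventually.of_forall (fun x => maxS_bound hC N (f x)))
    have h1 : ∫ x in E N, (maxS f φ N x - maxS f φ N (f x)) ∂μ ≤ ∫ x in E N, φ x ∂μ := by
      refine setIntegral_mono_on (((hMint N).sub hMf_int).integrableOn)
        hint.integrableOn (hEmeas N) ?_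
      intro x hx
      have := maxS_key N x hx
      linarith
    have h2 : ∫ x in E N, (maxS f φ N x - maxS f φ N (f x)) ∂μ
        = ∫ x in E N, maxS f φ N x ∂μ - ∫ x in E N, maxS f φ N (f x) ∂μ :=
      integral_sub (hMint N).integrableOn hMf_int.integrableOn
    have h3 : ∫ x in E N, maxS f φ N (f x) ∂μ ≤ ∫ x, maxS f φ N (f x) ∂μ :=
      setIntegral_le_integral hMf_int (Eventually.of_forall (fun x => maxS_nonneg N (f x)))
    have h4 : ∫ x, maxS f φ N (f x) ∂μ = ∫ x, maxS f φ N x ∂μ := by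
      rw [← integral_map hf.measurable.aemeasurable (hMmeas N).aestronglyMeasurable, hf.map_eq]
    have h5 : ∫ x, maxS f φ N x ∂μ = ∫ x in E N, maxS f φ N x ∂μ := by
      rw [← integral_add_compl (hEmeas N) (hMint N)]
      have : ∫ x in (E N)ᶜ, maxS f φ N x ∂μ = 0 := by
        refine setIntegral_eq_zero_of_forall_eq_zero ?_
        intro x hx
        simp only [hE, mem_compl_iff, mem_setOf_eq, not_lt] at hx
        exact le_antisymm hx (maxS_nonneg N x)
      linarith [this]
    linarith
  have htend := tendsto_setIntegral_of_monotone hEmeas hEmono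
    (hint.integrableOn (s := ⋃ N, E N))
  rw [hUnion] at htend
  exact ge_of_tendsto' htend hkey

end Maximal
section SeqLemmas

/-- bounded sequences helpers -/
lemma bdd_le {u : ℕ → ℝ} {C : ℝ} (h : ∀ n, |u n| ≤ C) :
    IsBoundedUnder (· ≤ ·) atTop u := isBoundedUnder_of ⟨C, fun n => (abs_le.1 (h n)).2⟩

lemma bdd_ge {u : ℕ → ℝ} {C : ℝ} (h : ∀ n, |u n| ≤ C) :
    IsBoundedUnder (· ≥ ·) atTop u := isBoundedUnder_of ⟨-C, fun n => (abs_le.1 (h n)).1⟩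

lemma limsup_eq_of_tendsto_sub {u w : ℕ → ℝ} {C : ℝ} (hu : ∀ n, |u n| ≤ C) (hw : ∀ n, |w n| ≤ C)
    (h : Filter.Tendsto (fun n => w n - u n) atTop (nhds 0)) :
    Filter.limsup w atTop = Filter.limsup u atTop := by
  have key : ∀ (a b : ℕ → ℝ), (∀ n, |a n| ≤ C) → (∀ n, |b n| ≤ C) →
      Filter.Tendsto (fun n => b n - a n) atTop (nhds 0) →
      Filter.limsup b atTop ≤ Filter.limsup a atTop := by
    intro a b ha hb hab
    refine le_of_forall_pos_le_add fun ε hε => ?_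
    have hev : ∀ᶠ n in atTop, b n ≤ a n + ε := by
      filter_upwards [(Metric.tendsto_nhds.1 hab) ε hε] with n hn
      rw [Real.dist_eq, sub_zero] at hn
      linarith [(abs_le.1 hn.le).2]
    calc Filter.limsup b atTop ≤ Filter.limsup (fun n => a n + ε) atTop :=
          limsup_le_limsup hev ((bdd_ge hb).isCoboundedUnder_le)
            (isBoundedUnder_of ⟨C + ε, fun n => by linarith [(abs_le.1 (ha n)).2]⟩)
      _ = Filter.limsup a atTop + ε :=
          limsup_add_const atTop a ε (bdd_le ha) ((bdd_ge ha).isCoboundedUnder_le)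
  exact le_antisymm (key u w hu hw h) (key w u hw hu (by simpa using h.neg))

lemma limsup_neg_seq {u : ℕ → ℝ} {C : ℝ} (hu : ∀ n, |u n| ≤ C) :
    Filter.limsup (fun n => -u n) atTop = -Filter.liminf u atTop := by
  have := Antitone.map_liminf_of_continuousAt (F := atTop) (f := fun x : ℝ => -x)
    (fun x y hxy => neg_le_neg hxy) u (continuous_neg.continuousAt)
    ((bdd_le hu).isCoboundedUnder_ge) (bdd_ge hu)
  exact this.symm

end SeqLemmas

section Birkhoff

variable {X : Type} [MeasurableSpace X] {μ : Measure X} [IsProbabilityMeasure μ]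
  {f : X → X} {φ : X → ℝ}

lemma avg_bound {C : ℝ} (hC : ∀ x, |φ x| ≤ C) (hC0 : 0 ≤ C) (n : ℕ) (x : X) :
    |(n:ℝ)⁻¹ * birkhoffSum f φ n x| ≤ C := by
  rcases Nat.eq_zero_or_pos n with rfl | hn
  · simpa using hC0
  · have h1 : |birkhoffSum f φ n x| ≤ n * C := by
      calc |birkhoffSum f φ n x| ≤ ∑ k ∈ Finset.range n, |φ (f^[k] x)| :=
            Finset.abs_sum_le_sum_abs _ _
        _ ≤ ∑ k ∈ Finset.range n, C := Finset.sum_le_sum (fun k _ => hC _)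
        _ = n * C := by simp [mul_comm]
    rw [abs_mul, abs_inv, Nat.abs_cast]
    rw [inv_mul_le_iff₀ (by exact_mod_cast hn)]
    exact h1

lemma avg_comp_sub_tendsto {C : ℝ} (hC : ∀ x, |φ x| ≤ C) (x : X) :
    Tendsto (fun n : ℕ => (n:ℝ)⁻¹ * birkhoffSum f φ n (f x) - (n:ℝ)⁻¹ * birkhoffSum f φ n x)
      atTop (nhds 0) := by
  have hkey : ∀ n : ℕ, birkhoffSum f φ n (f x) - birkhoffSum f φ n x = φ (f^[n] x) - φ x := by
    intro n
    have h1 := birkhoffSum_succ f φ n x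
    have h2 := birkhoffSum_succ' f φ n x
    have : birkhoffSum f φ n x + φ (f^[n] x) = φ x + birkhoffSum f φ n (f x) := by
      rw [← h1, h2]
    linarith
  apply squeeze_zero_norm (a := fun n : ℕ => (2*C) * (n:ℝ)⁻¹)
  · intro n
    rw [Real.norm_eq_abs, ← mul_sub, abs_mul, abs_inv, Nat.abs_cast, hkey]
    rcases Nat.eq_zero_or_pos n with rfl | hn
    · simp
    · have hb : |φ (f^[n] x) - φ x| ≤ 2 * C := by
        calc |φ (f^[n] x) - φ x| ≤ |φ (f^[n] x)| + |φ x| := abs_sub _ _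
          _ ≤ C + C := add_le_add (hC _) (hC _)
          _ = 2 * C := by ring
      have hinv : (0:ℝ) ≤ (n:ℝ)⁻¹ := by positivity
      rw [mul_comm ((n:ℝ)⁻¹) _]
      exact mul_le_mul_of_nonneg_right hb hinv
  · simpa using tendsto_const_nhds.mul (tendsto_inv_atTop_nhds_zero_nat (𝕜 := ℝ))

/-- constant value of limsup of Birkhoff averages is at most the space average. -/
lemma limsup_avg_le_integral (herg : Ergodic f μ) (hφ : Measurable φ)
    {C : ℝ} (hC : ∀ x, |φ x| ≤ C) (hC0 : 0 ≤ C) :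
    ∃ c : ℝ, ((fun x => Filter.limsup (fun n : ℕ => (n:ℝ)⁻¹ * birkhoffSum f φ n x) atTop)
        =ᵐ[μ] fun _ => c) ∧ c ≤ ∫ x, φ x ∂μ := by
  have hf := herg.toMeasurePreserving
  have hSmeas : ∀ n : ℕ, Measurable (fun x => (n:ℝ)⁻¹ * birkhoffSum f φ n x) := fun n =>
    (Finset.measurable_sum _ (fun k _ => hφ.comp (hf.measurable.iterate k))).const_mul _
  set L : X → ℝ := fun x => Filter.limsup (fun n : ℕ => (n:ℝ)⁻¹ * birkhoffSum f φ n x) atTop with hL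
  have hLmeas : Measurable L := Measurable.limsup hSmeas
  have hLinv : L ∘ f = L := by
    funext x
    exact limsup_eq_of_tendsto_sub (avg_bound hC hC0 · x) (avg_bound hC hC0 · (f x))
      (avg_comp_sub_tendsto hC x)
  obtain ⟨c, hc⟩ := herg.ae_eq_const_of_ae_eq_comp₀ hLmeas.nullMeasurable
    (Eventually.of_forall (fun x => congrFun hLinv x))
  refine ⟨c, hc, ?_⟩
  by_contra hlt
  push_neg at hlt
  set α : ℝ := ((∫ x, φ x ∂μ) + c) / 2 with hα
  have hα1 : ∫ x, φ x ∂μ < α := by rw [hα]; linarith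
  have hα2 : α < c := by rw [hα]; linarith
  set ψ : X → ℝ := fun x => φ x - α with hψ
  have hψm : Measurable ψ := hφ.sub measurable_const
  have hψb : ∀ x, |ψ x| ≤ C + |α| := fun x => by
    calc |ψ x| ≤ |φ x| + |α| := abs_sub _ _
      _ ≤ C + |α| := by linarith [hC x]
  have hψint : Integrable ψ μ :=
    (integrable_const (C + |α|)).mono' hψm.aestronglyMeasurable (Eventually.of_forall hψb)
  have hSψ : ∀ n x, birkhoffSum f ψ n x = birkhoffSum f φ n x - n * α := by
    intro n x
    simp only [hψ, birkhoffSum, Finset.sum_sub_distrib, Finset.sum_const, Finset.card_range,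
      nsmul_eq_mul]
  set G : Set X := {x | ∃ n, 1 ≤ n ∧ 0 < birkhoffSum f ψ n x} with hG
  have hGmeas : MeasurableSet G := by
    have : G = ⋃ n, ⋃ (_ : 1 ≤ n), {x | 0 < birkhoffSum f ψ n x} := by
      ext x; simp [hG]
    rw [this]
    exact MeasurableSet.iUnion fun n => MeasurableSet.iUnion fun _ =>
      measurableSet_lt measurable_const
        (Finset.measurable_sum _ (fun k _ => hψm.comp (hf.measurable.iterate k)))
  have hae : ∀ᵐ x ∂μ, x ∈ G := by
    filter_upwards [hc] with x hx
    have hsup : α < Filter.limsup (fun n : ℕ => (n:ℝ)⁻¹ * birkhoffSum f φ n x) atTop := by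
      show α < L x
      rw [hx]; exact hα2
    have hfreq := frequently_lt_of_lt_limsup
      ((bdd_ge (fun n => avg_bound hC hC0 n x)).isCoboundedUnder_le) hsup
    obtain ⟨n, hn1, hn2⟩ := (hfreq.and_eventually (eventually_ge_atTop 1)).exists
    refine ⟨n, hn2, ?_⟩
    rw [hSψ]
    have hn0 : (0:ℝ) < n := by exact_mod_cast hn2
    have hmul := mul_lt_mul_of_pos_left hn1 hn0
    rw [← mul_assoc, mul_inv_cancel₀ (ne_of_gt hn0), one_mul] at hmul
    linarith
  have h0 : μ Gᶜ = 0 := by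
    have := ae_iff.1 hae
    simpa [Set.compl_def] using this
  have hints : 0 ≤ ∫ x in G, ψ x ∂μ := maximal_ergodic hf hψm hψb
  have heq : ∫ x in G, ψ x ∂μ = ∫ x, ψ x ∂μ := by
    rw [← integral_add_compl hGmeas hψint]
    have : ∫ x in Gᶜ, ψ x ∂μ = 0 := by
      rw [Measure.restrict_eq_zero.2 h0]
      simp
    rw [this, add_zero]
  have hφint : Integrable φ μ :=
    (integrable_const C).mono' hφ.aestronglyMeasurable (Eventually.of_forall hC)
  have hψval : ∫ x, ψ x ∂μ = (∫ x, φ x ∂μ) - α := by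
    rw [hψ]
    rw [integral_sub hφint (integrable_const α), integral_const]
    simp
  rw [heq, hψval] at hints
  linarith

/-- Birkhoff's pointwise ergodic theorem for bounded measurable functions. -/
theorem birkhoff_bounded (herg : Ergodic f μ) (hφ : Measurable φ)
    {C : ℝ} (hC : ∀ x, |φ x| ≤ C) (hC0 : 0 ≤ C) :
    ∀ᵐ x ∂μ, Tendsto (fun n : ℕ => (n:ℝ)⁻¹ * birkhoffSum f φ n x) atTop
      (nhds (∫ x, φ x ∂μ)) := by
  obtain ⟨c1, hc1, hc1le⟩ := limsup_avg_le_integral herg hφ hC hC0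
  have hC' : ∀ x, |(fun y => -φ y) x| ≤ C := fun x => by simpa using hC x
  obtain ⟨c2, hc2, hc2le⟩ := limsup_avg_le_integral herg hφ.neg hC' hC0
  have hSneg : ∀ (n : ℕ) (x : X), birkhoffSum f (fun y => -φ y) n x = -birkhoffSum f φ n x := by
    intro n x
    simp [birkhoffSum]
  simp only [Pi.neg_apply, integral_neg] at hc2le
  filter_upwards [hc1, hc2] with x hx1 hx2
  have hb : ∀ n : ℕ, |(n:ℝ)⁻¹ * birkhoffSum f φ n x| ≤ C := fun n => avg_bound hC hC0 n x
  have hx2' : Filter.liminf (fun n : ℕ => (n:ℝ)⁻¹ * birkhoffSum f φ n x) atTop = -c2 := by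
    have h1 : Filter.limsup (fun n : ℕ => -((n:ℝ)⁻¹ * birkhoffSum f φ n x)) atTop = c2 := by
      rw [← hx2]
      congr 1
      funext n
      rw [show -φ = fun y => -φ y from rfl, hSneg]
      ring
    rw [← neg_eq_iff_eq_neg, ← h1, limsup_neg_seq hb]
  have hle1 : Filter.liminf (fun n : ℕ => (n:ℝ)⁻¹ * birkhoffSum f φ n x) atTop
      ≤ Filter.limsup (fun n : ℕ => (n:ℝ)⁻¹ * birkhoffSum f φ n x) atTop :=
    liminf_le_limsup (bdd_le hb) (bdd_ge hb)
  rw [hx1, hx2'] at hle1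
  have h1 : c1 = ∫ x, φ x ∂μ := by linarith
  have h2 : -c2 = ∫ x, φ x ∂μ := by linarith
  exact tendsto_of_liminf_eq_limsup (hx2'.trans h2) (hx1.trans h1) (bdd_le hb) (bdd_ge hb)

end Birkhoff

section Det

variable {X : Type} {f : X → X} {Γ : Set X} {x : X} {θ : ℝ}

/-- abbreviation for the indicator of Γ -/
noncomputable def indΓ (Γ : Set X) : X → ℝ := Γ.indicator (fun _ => (1:ℝ))

lemma matCoc_add {d : ℕ} (f : X → X) (A : X → Matrix.GeneralLinearGroup (Fin d) ℂ)
    (m n : ℕ) (x : X) :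
    matCoc f A (m + n) x = matCoc f A m (f^[n] x) * matCoc f A n x := by
  induction n generalizing x with
  | zero => simp [matCoc]
  | succ n ih =>
    have : m + (n + 1) = (m + n) + 1 := rfl
    rw [this]
    show matCoc f A (m + n) (f x) * A x = _
    rw [ih (f x)]
    have h2 : f^[n] (f x) = f^[n+1] x := (Function.iterate_succ_apply f n x).symm
    rw [h2, mul_assoc]
    rfl

lemma indCoc_eq {d : ℕ} (f : X → X) (Γ : Set X) (A : X → Matrix.GeneralLinearGroup (Fin d) ℂ)
    (n : ℕ) (x : X) :
    indCoc f Γ A n x = matCoc f A (birkhoffSum (retMap f Γ) (retTime f Γ) n x) x := by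
  induction n generalizing x with
  | zero => simp [indCoc, matCoc, birkhoffSum]
  | succ n ih =>
    show matCoc (retMap f Γ) _ n (retMap f Γ x) * matCoc f A (retTime f Γ x) x = _
    rw [show matCoc (retMap f Γ) (fun x => matCoc f A (retTime f Γ x) x) n (retMap f Γ x)
        = indCoc f Γ A n (retMap f Γ x) from rfl, ih]
    rw [birkhoffSum_succ' (retMap f Γ) (retTime f Γ) n x, add_comm (retTime f Γ x) _]
    rw [matCoc_add]
    rfl

/-- If the Birkhoff averages of the indicator of `Γ` at `x` tend to `θ > 0`, then the orbit
of `x` visits `Γ` at arbitrarily large times. -/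
lemma returns_exist (hcnt : Tendsto (fun n : ℕ => (n:ℝ)⁻¹ * birkhoffSum f (indΓ Γ) n x)
      atTop (nhds θ)) (hθ : 0 < θ) (m : ℕ) :
    ∃ n, m < n ∧ f^[n] x ∈ Γ := by
  by_contra hcon
  push_neg at hcon
  set K : ℝ := birkhoffSum f (indΓ Γ) (m+1) x with hK
  have hconst : ∀ j : ℕ, birkhoffSum f (indΓ Γ) (j + (m+1)) x = K := by
    intro j
    rw [add_comm j (m+1), birkhoffSum_add]
    have : birkhoffSum f (indΓ Γ) j (f^[m+1] x) = 0 := by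
      apply Finset.sum_eq_zero
      intro k _
      rw [← Function.iterate_add_apply]
      have : f^[k + (m+1)] x ∉ Γ := hcon _ (by omega)
      simp [indΓ, Set.indicator_of_notMem this]
    rw [this, add_zero]
  have h1 : Tendsto (fun j : ℕ => ((j + (m+1) : ℕ):ℝ)⁻¹ * birkhoffSum f (indΓ Γ) (j + (m+1)) x)
      atTop (nhds θ) := hcnt.comp (tendsto_add_atTop_nat (m+1))
  have h2 : Tendsto (fun j : ℕ => ((j + (m+1) : ℕ):ℝ)⁻¹ * birkhoffSum f (indΓ Γ) (j + (m+1)) x)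
      atTop (nhds 0) := by
    have : (fun j : ℕ => ((j + (m+1) : ℕ):ℝ)⁻¹ * birkhoffSum f (indΓ Γ) (j + (m+1)) x)
        = (fun n : ℕ => (n:ℝ)⁻¹ * K) ∘ (fun j => j + (m+1)) := by
      funext j
      simp [hconst j]
    rw [this]
    have hz : Tendsto (fun n : ℕ => (n:ℝ)⁻¹ * K) atTop (nhds 0) := by
      simpa using tendsto_inv_atTop_nhds_zero_nat.mul_const K
    exact hz.comp (tendsto_add_atTop_nat (m+1))
  exact absurd (tendsto_nhds_unique h1 h2) (ne_of_gt hθ)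

lemma retSet_nonempty (hcnt : Tendsto (fun n : ℕ => (n:ℝ)⁻¹ * birkhoffSum f (indΓ Γ) n x)
      atTop (nhds θ)) (hθ : 0 < θ) (m : ℕ) :
    {n : ℕ | 1 ≤ n ∧ f^[n] (f^[m] x) ∈ Γ}.Nonempty := by
  obtain ⟨n, hn1, hn2⟩ := returns_exist hcnt hθ m
  refine ⟨n - m, by omega, ?_⟩
  rw [← Function.iterate_add_apply]
  have : n - m + m = n := by omega
  rw [this]
  exact hn2

lemma retTime_mem {y : X} (hne : {n : ℕ | 1 ≤ n ∧ f^[n] y ∈ Γ}.Nonempty) :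
    1 ≤ retTime f Γ y ∧ retMap f Γ y ∈ Γ := by
  have := Nat.sInf_mem hne
  exact ⟨this.1, this.2⟩

lemma retTime_min {y : X} {k : ℕ} (h1 : 1 ≤ k) (h2 : k < retTime f Γ y) : f^[k] y ∉ Γ :=
  fun hk => Nat.notMem_of_lt_sInf h2 ⟨h1, hk⟩

section Orbit

variable (hcnt : Tendsto (fun n : ℕ => (n:ℝ)⁻¹ * birkhoffSum f (indΓ Γ) n x) atTop (nhds θ))
  (hθ : 0 < θ) (hx : x ∈ Γ)

include hcnt hθ hx

/-- orbit structure: iterates of the return map stay in `Γ` and equal `f` iterated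
`birkhoffSum` of return times. -/
lemma orbit_struct (j : ℕ) :
    (retMap f Γ)^[j] x = f^[birkhoffSum (retMap f Γ) (retTime f Γ) j x] x ∧
      (retMap f Γ)^[j] x ∈ Γ := by
  induction j with
  | zero => exact ⟨rfl, hx⟩
  | succ j ih =>
    obtain ⟨hit, hmem⟩ := ih
    have hne : {n : ℕ | 1 ≤ n ∧ f^[n] ((retMap f Γ)^[j] x) ∈ Γ}.Nonempty := by
      rw [hit]; exact retSet_nonempty hcnt hθ _
    constructor
    · rw [Function.iterate_succ_apply', retMap, hit, ← Function.iterate_add_apply,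
        birkhoffSum_succ]
      congr 1
      rw [hit]
      omega
    · rw [Function.iterate_succ_apply']
      exact (retTime_mem hne).2

lemma orbit_retSet_nonempty (j : ℕ) :
    {n : ℕ | 1 ≤ n ∧ f^[n] ((retMap f Γ)^[j] x) ∈ Γ}.Nonempty := by
  rw [(orbit_struct hcnt hθ hx j).1]
  exact retSet_nonempty hcnt hθ _

lemma count_at_return (j : ℕ) :
    birkhoffSum f (indΓ Γ) (birkhoffSum (retMap f Γ) (retTime f Γ) j x) x = (j : ℝ) := by
  induction j with
  | zero => simp [birkhoffSum]
  | succ j ih =>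
    set y := (retMap f Γ)^[j] x with hy
    obtain ⟨hit, hmem⟩ := orbit_struct hcnt hθ hx j
    have hne := orbit_retSet_nonempty hcnt hθ hx j
    rw [birkhoffSum_succ, birkhoffSum_add, ih, ← hit]
    have hone : birkhoffSum f (indΓ Γ) (retTime f Γ y) y = 1 := by
      have hr1 : 1 ≤ retTime f Γ y := (retTime_mem hne).1
      rw [birkhoffSum]
      rw [Finset.sum_eq_single_of_mem 0 (Finset.mem_range.2 (by omega))]
      · simp [indΓ, Set.indicator_of_mem (show y ∈ Γ from hmem)]
      · intro k hk hk0
        have : f^[k] y ∉ Γ := retTime_min (by omega) (Finset.mem_range.1 hk)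
        simp [indΓ, Set.indicator_of_notMem this]
    rw [hone]
    push_cast
    ring

lemma T_ge (j : ℕ) : j ≤ birkhoffSum (retMap f Γ) (retTime f Γ) j x := by
  induction j with
  | zero => simp [birkhoffSum]
  | succ j ih =>
    rw [birkhoffSum_succ]
    have := (retTime_mem (orbit_retSet_nonempty hcnt hθ hx j)).1
    omega

lemma T_tendsto : Tendsto (fun j => birkhoffSum (retMap f Γ) (retTime f Γ) j x) atTop atTop :=
  tendsto_atTop_mono (T_ge hcnt hθ hx) tendsto_id

lemma T_avg_tendsto :
    Tendsto (fun n : ℕ => (n:ℝ)⁻¹ * ((birkhoffSum (retMap f Γ) (retTime f Γ) n x : ℕ) : ℝ))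
      atTop (nhds θ⁻¹) := by
  set T : ℕ → ℕ := fun n => birkhoffSum (retMap f Γ) (retTime f Γ) n x with hT
  have h1 : Tendsto (fun n : ℕ => ((T n : ℕ):ℝ)⁻¹ * birkhoffSum f (indΓ Γ) (T n) x)
      atTop (nhds θ) := hcnt.comp (T_tendsto hcnt hθ hx)
  have h1' : Tendsto (fun n : ℕ => ((T n :ℕ):ℝ)⁻¹ * (n:ℝ)) atTop (nhds θ) := by
    refine h1.congr fun n => ?_
    rw [count_at_return hcnt hθ hx n]
  have h2 := h1'.inv₀ (ne_of_gt hθ)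
  refine h2.congr' ?_
  filter_upwards [eventually_ge_atTop 1] with n hn
  have hTn : (1:ℕ) ≤ T n := le_trans hn (T_ge hcnt hθ hx n)
  have hTn0 : ((T n : ℕ):ℝ) ≠ 0 := by exact_mod_cast Nat.one_le_iff_ne_zero.1 hTn
  have hn0 : (n:ℝ) ≠ 0 := by exact_mod_cast Nat.one_le_iff_ne_zero.1 hn
  rw [mul_inv, inv_inv]
  ring

end Orbit

end Det

section Final

variable {X : Type} {f : X → X} {Γ : Set X} {x : X} {θ : ℝ}

lemma final_limit {d : ℕ} (A : X → Matrix.GeneralLinearGroup (Fin d) ℂ)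
    (hcnt : Tendsto (fun n : ℕ => (n:ℝ)⁻¹ * birkhoffSum f (indΓ Γ) n x) atTop (nhds θ))
    (hθ : 0 < θ) (hx : x ∈ Γ) (v : Fin d → ℂ) (χ : ℝ)
    (H : Tendsto (fun m : ℕ =>
        (1 / (m : ℝ)) * Real.log ‖((matCoc f A m x : Matrix (Fin d) (Fin d) ℂ)).mulVec v‖)
      atTop (nhds χ)) :
    Tendsto (fun n : ℕ =>
        (1 / (n : ℝ)) * Real.log ‖((indCoc f Γ A n x : Matrix (Fin d) (Fin d) ℂ)).mulVec v‖)
      atTop (nhds (χ / θ)) := by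
  set T : ℕ → ℕ := fun n => birkhoffSum (retMap f Γ) (retTime f Γ) n x with hT
  set F : ℕ → ℝ := fun m =>
    Real.log ‖((matCoc f A m x : Matrix (Fin d) (Fin d) ℂ)).mulVec v‖ with hF
  have h1 : Tendsto (fun n : ℕ => (1 / ((T n : ℕ) : ℝ)) * F (T n)) atTop (nhds χ) :=
    H.comp (T_tendsto hcnt hθ hx)
  have h2 := T_avg_tendsto hcnt hθ hx
  have h3 : Tendsto (fun n : ℕ => ((n:ℝ)⁻¹ * ((T n : ℕ):ℝ)) * ((1 / ((T n : ℕ):ℝ)) * F (T n)))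
      atTop (nhds (θ⁻¹ * χ)) := h2.mul h1
  have hval : θ⁻¹ * χ = χ / θ := by rw [div_eq_mul_inv, mul_comm]
  rw [hval] at h3
  refine h3.congr' ?_
  filter_upwards [eventually_ge_atTop 1] with n hn
  have hTn : (1:ℕ) ≤ T n := le_trans hn (T_ge hcnt hθ hx n)
  have hTn0 : ((T n : ℕ):ℝ) ≠ 0 := by exact_mod_cast Nat.one_le_iff_ne_zero.1 hTn
  have hn0 : (n:ℝ) ≠ 0 := by exact_mod_cast Nat.one_le_iff_ne_zero.1 hn
  have hind : ((indCoc f Γ A n x : Matrix (Fin d) (Fin d) ℂ)) =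
      ((matCoc f A (T n) x : Matrix (Fin d) (Fin d) ℂ)) := by
    rw [indCoc_eq]
  rw [hind]
  show ((n:ℝ)⁻¹ * ((T n : ℕ):ℝ)) * ((1 / ((T n : ℕ):ℝ)) * F (T n)) = (1 / (n : ℝ)) * F (T n)
  field_simp

end Final


end AUX

/-- **Section A.1 (Inducing).** For `μ`-a.e. `x ∈ Γ`, all the iterates of `x` under the
first return map `g` lie in `Γ` with finite return time, and if the Lyapunov exponent of
the cocycle `A` over `f` along `v` at `x` is `χ`, then the exponent of the induced
cocycle `B` over `g` along `v` at `x` is `χ/μ(Γ)`. -/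
theorem stmt14 {X : Type} [MeasurableSpace X] (μ : Measure X) [IsProbabilityMeasure μ]
    (f : X → X) (herg : Ergodic f μ)
    (Γ : Set X) (hΓm : MeasurableSet Γ) (hΓ : 0 < μ Γ)
    (d : ℕ) (hd : 1 ≤ d) (A : X → Matrix.GeneralLinearGroup (Fin d) ℂ) :
    ∀ᵐ x ∂μ, x ∈ Γ →
      ((∀ j : ℕ, (retMap f Γ)^[j] x ∈ Γ ∧
          {n : ℕ | 1 ≤ n ∧ f^[n] ((retMap f Γ)^[j] x) ∈ Γ}.Nonempty) ∧
        ∀ v : Fin d → ℂ, v ≠ 0 → ∀ χ : ℝ,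
          Tendsto (fun m : ℕ =>
              (1 / (m : ℝ)) * Real.log ‖((matCoc f A m x : Matrix (Fin d) (Fin d) ℂ)).mulVec v‖)
            atTop (nhds χ) →
          Tendsto (fun n : ℕ =>
              (1 / (n : ℝ)) * Real.log ‖((indCoc f Γ A n x : Matrix (Fin d) (Fin d) ℂ)).mulVec v‖)
            atTop (nhds (χ / (μ Γ).toReal))) := by
  classical
  have hθ : 0 < (μ Γ).toReal := ENNReal.toReal_pos hΓ.ne' (measure_ne_top μ Γ)
  have hindm : Measurable (indΓ Γ : X → ℝ) := measurable_const.indicator hΓm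
  have hbnd : ∀ y : X, |indΓ Γ y| ≤ 1 := fun y => by
    by_cases h : y ∈ Γ <;>
      simp [indΓ, Set.indicator_of_mem, Set.indicator_of_notMem, h]
  have hBirk := birkhoff_bounded herg hindm hbnd zero_le_one
  have hval : ∫ y, indΓ Γ y ∂μ = (μ Γ).toReal := by
    have := integral_indicator_const (μ := μ) (1:ℝ) hΓm
    simpa [indΓ, measureReal_def] using this
  rw [hval] at hBirk
  filter_upwards [hBirk] with x hcnt hx
  exact ⟨fun j => ⟨(orbit_struct hcnt hθ hx j).2, orbit_retSet_nonempty hcnt hθ hx j⟩,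
    fun v hv χ H => final_limit A hcnt hθ hx v χ H⟩
end

section
/- Let X be a compact metric space, let N ⊆ X be a closed subset, and let Q : X → X be a Borel measurable map whose restriction to X ∖ N is continuous. Let (P_n) be a sequence of continuous maps X → X converging to Q uniformly on every compact subset of X ∖ N. Let (ν_n) be Borel probability measures on X converging weakly to a Borel probability ν with ν(N) = 0. Then the pushforwards (P_n)_*ν_n converge weakly to Q_*ν. -/
open MeasureTheory Filter

/-- **Lemma 2.5.** Let `X` be a compact metric space, `N ⊆ X` closed, `Q : X → X` Borel
measurable and continuous off `N`, and `Pₙ : X → X` continuous maps converging to `Q`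
uniformly on compact subsets of `X ∖ N`. If probabilities `νₙ` converge weakly to `ν`
with `ν(N) = 0`, then `(Pₙ)_*νₙ` converges weakly to `Q_*ν`. -/
theorem stmt18 {X : Type} [MetricSpace X] [CompactSpace X]
    [MeasurableSpace X] [BorelSpace X]
    (N : Set X) (hN : IsClosed N)
    (Q : X → X) (hQm : Measurable Q) (hQc : ContinuousOn Q Nᶜ)
    (P : ℕ → X → X) (hPc : ∀ n, Continuous (P n))
    (hconv : ∀ K : Set X, K ⊆ Nᶜ → IsCompact K →
      TendstoUniformlyOn (fun n => P n) Q atTop K)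
    (ν : ℕ → Measure X) (hνp : ∀ n, IsProbabilityMeasure (ν n))
    (νlim : Measure X) [IsProbabilityMeasure νlim]
    (hweak : ∀ g : C(X, ℝ),
      Tendsto (fun n => ∫ x, g x ∂(ν n)) atTop (nhds (∫ x, g x ∂νlim)))
    (hνN : νlim N = 0) :
    ∀ g : C(X, ℝ),
      Tendsto (fun n => ∫ x, g x ∂(Measure.map (P n) (ν n))) atTop
        (nhds (∫ x, g x ∂(Measure.map Q νlim))) := by
  intro g
  have hgm : Measurable g := g.continuous.measurable
  set M : ℝ := ‖g‖ + 1 with hMdef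
  have hM : 0 < M := by positivity
  have hM1 : 1 ≤ M := by rw [hMdef]; linarith [norm_nonneg g]
  have hgb : ∀ x, |g x| ≤ M := fun x =>
    le_trans (by simpa [Real.norm_eq_abs] using g.norm_coe_le_norm x) (by rw [hMdef]; linarith)
  have hint : ∀ (f : X → ℝ) (μ : Measure X) [IsFiniteMeasure μ], Measurable f →
      (∀ x, |f x| ≤ M) → Integrable f μ := by
    intro f μ _ hf hb
    exact Integrable.mono' (integrable_const M) hf.aestronglyMeasurable
      (Filter.Eventually.of_forall fun x => by simpa [Real.norm_eq_abs] using hb x)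
  have hmapP : ∀ n, ∫ x, g x ∂(Measure.map (P n) (ν n)) = ∫ x, g (P n x) ∂(ν n) := fun n =>
    integral_map (hPc n).measurable.aemeasurable g.continuous.aestronglyMeasurable
  have hmapQ : ∫ x, g x ∂(Measure.map Q νlim) = ∫ x, g (Q x) ∂νlim :=
    integral_map hQm.aemeasurable g.continuous.aestronglyMeasurable
  simp only [hmapP, hmapQ]
  rw [Metric.tendsto_nhds]
  intro ε hε
  set δ : ℝ := ε / (8 * M) with hδdef
  have hδ : 0 < δ := by positivity
  -- inner regular approximation
  obtain ⟨F, hFsub, hFclosed, hFlt⟩ :=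
    hN.measurableSet.compl.exists_isClosed_lt_add (measure_ne_top νlim Nᶜ)
      ((ENNReal.ofReal_pos.mpr hδ).ne')
  have hNc1 : νlim Nᶜ = 1 := by
    rw [measure_compl hN.measurableSet (measure_ne_top _ _), hνN, measure_univ, tsub_zero]
  have hFc : (νlim Fᶜ).toReal < δ := by
    rw [← ENNReal.lt_ofReal_iff_toReal_lt (measure_ne_top _ _)]
    rw [measure_compl hFclosed.measurableSet (measure_ne_top _ _), measure_univ]
    rw [hNc1] at hFlt
    rw [ENNReal.sub_lt_iff_lt_right (measure_ne_top _ _) (measure_univ (μ := νlim) ▸ measure_mono (Set.subset_univ F))]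
    rwa [add_comm]
  obtain ⟨U, hUopen, hFU, hUN⟩ :=
    normal_exists_closure_subset hFclosed hN.isOpen_compl hFsub
  obtain ⟨φ, hφ0, hφ1, hφ01⟩ :=
    exists_continuous_zero_one_of_isClosed (isClosed_compl_iff.mpr hUopen) hFclosed
      (Set.disjoint_left.mpr fun x hxU hxF => hxU (hFU hxF))
  have habsφ : ∀ x, |φ x| ≤ 1 := fun x =>
    abs_le.mpr ⟨by linarith [(hφ01 x).1], (hφ01 x).2⟩
  set χ : X → ℝ := fun x => 1 - φ x with hχdef
  have hχcont : Continuous χ := continuous_const.sub φ.continuous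
  have hχ01 : ∀ x, 0 ≤ χ x ∧ χ x ≤ 1 := fun x =>
    ⟨by simp [hχdef]; exact (hφ01 x).2, by simp [hχdef]; linarith [(hφ01 x).1]⟩
  have habsχ : ∀ x, |χ x| ≤ 1 := fun x => abs_le.mpr ⟨by linarith [(hχ01 x).1], (hχ01 x).2⟩
  -- ψ = (g ∘ Q) * φ is continuous
  have hψcont : Continuous fun x => g (Q x) * φ x := by
    rw [continuous_iff_continuousAt]
    intro x
    by_cases hx : x ∈ N
    · have hmem : (closure U)ᶜ ∈ nhds x :=
        isClosed_closure.isOpen_compl.mem_nhds fun hc => (hUN hc) hx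
      have heq : (fun x => g (Q x) * φ x) =ᶠ[nhds x] fun _ => (0:ℝ) := by
        filter_upwards [hmem] with y hy
        have : φ y = 0 := hφ0 fun hyU => hy (subset_closure hyU)
        simp [this]
      exact heq.continuousAt
    · have hQx : ContinuousAt Q x := hQc.continuousAt (hN.isOpen_compl.mem_nhds hx)
      exact (g.continuous.continuousAt.comp hQx).mul φ.continuous.continuousAt
  set ψ : C(X, ℝ) := ⟨fun x => g (Q x) * φ x, hψcont⟩ with hψdef
  have hψx : ∀ x, ψ x = g (Q x) * φ x := fun x => rfl
  have hψb : ∀ x, |ψ x| ≤ M := fun x => by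
    rw [hψx, abs_mul]
    calc |g (Q x)| * |φ x| ≤ M * 1 :=
          mul_le_mul (hgb _) (habsφ x) (abs_nonneg _) hM.le
      _ = M := mul_one M
  set χc : C(X, ℝ) := ⟨χ, hχcont⟩ with hχcdef
  have hχcx : ∀ x, χc x = χ x := fun x => rfl
  -- ∫ χ dνlim < δ
  have hχν : ∫ x, χ x ∂νlim < δ := by
    have hind : Integrable (Fᶜ.indicator fun _ => (1:ℝ)) νlim :=
      (integrable_const 1).indicator hFclosed.measurableSet.compl
    have hmono : ∫ x, χ x ∂νlim ≤ ∫ x, Fᶜ.indicator (fun _ => (1:ℝ)) x ∂νlim := by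
      apply integral_mono (hint χ νlim hχcont.measurable fun x => (habsχ x).trans hM1) hind
      intro x
      by_cases hxF : x ∈ F
      · simp [Set.indicator, hxF, hχdef, hφ1 hxF]
      · simp only [Set.indicator, Set.mem_compl_iff, hxF, not_false_iff, if_pos]
        exact (hχ01 x).2
    calc ∫ x, χ x ∂νlim ≤ ∫ x, Fᶜ.indicator (fun _ => (1:ℝ)) x ∂νlim := hmono
      _ = (νlim Fᶜ).toReal := by
          rw [MeasureTheory.integral_indicator hFclosed.measurableSet.compl,
            MeasureTheory.setIntegral_const, smul_eq_mul, mul_one]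
          rfl
      _ < δ := hFc
  -- eventual estimates
  obtain ⟨η, hη, hgη⟩ := Metric.uniformContinuous_iff.mp
    (CompactSpace.uniformContinuous_of_continuous g.continuous) (ε/8) (by positivity)
  have hev1 : ∀ᶠ n in atTop, ∀ x ∈ closure U, dist (Q x) (P n x) < η :=
    Metric.tendstoUniformlyOn_iff.mp (hconv (closure U) hUN isClosed_closure.isCompact) η hη
  have hev2 : ∀ᶠ n in atTop, dist (∫ x, ψ x ∂ν n) (∫ x, ψ x ∂νlim) < ε/8 :=
    Metric.tendsto_nhds.mp (hweak ψ) (ε/8) (by positivity)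
  have hχνlim : ∫ x, χc x ∂νlim < δ := by simpa [hχcx] using hχν
  have hev3 : ∀ᶠ n in atTop, ∫ x, χc x ∂ν n < δ :=
    (hweak χc).eventually_lt_const hχνlim
  filter_upwards [hev1, hev2, hev3] with n h1 h2 h3
  haveI := hνp n
  -- integrability facts
  have hbPφ : ∀ x, |g (P n x) * φ x| ≤ M := fun x => by
    rw [abs_mul]
    calc |g (P n x)| * |φ x| ≤ M * 1 := mul_le_mul (hgb _) (habsφ x) (abs_nonneg _) hM.le
      _ = M := mul_one M
  have hbPχ : ∀ x, |g (P n x) * χ x| ≤ M := fun x => by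
    rw [abs_mul]
    calc |g (P n x)| * |χ x| ≤ M * 1 := mul_le_mul (hgb _) (habsχ x) (abs_nonneg _) hM.le
      _ = M := mul_one M
  have hbQχ : ∀ x, |g (Q x) * χ x| ≤ M := fun x => by
    rw [abs_mul]
    calc |g (Q x)| * |χ x| ≤ M * 1 := mul_le_mul (hgb _) (habsχ x) (abs_nonneg _) hM.le
      _ = M := mul_one M
  have iPφ : Integrable (fun x => g (P n x) * φ x) (ν n) :=
    hint _ _ (((g.continuous.comp (hPc n)).mul φ.continuous).measurable) hbPφ
  have iPχ : Integrable (fun x => g (P n x) * χ x) (ν n) :=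
    hint _ _ (((g.continuous.comp (hPc n)).mul hχcont).measurable) hbPχ
  have iψn : Integrable (fun x => ψ x) (ν n) :=
    hint _ _ ψ.continuous.measurable hψb
  have iQφν : Integrable (fun x => g (Q x) * φ x) νlim :=
    hint _ _ hψcont.measurable (fun x => by simpa [hψx] using hψb x)
  have iQχν : Integrable (fun x => g (Q x) * χ x) νlim :=
    hint _ _ (((hgm.comp hQm)).mul hχcont.measurable) hbQχ
  -- splits
  have hsplitP : ∫ x, g (P n x) ∂ν n
      = (∫ x, g (P n x) * φ x ∂ν n) + ∫ x, g (P n x) * χ x ∂ν n := by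
    rw [← integral_add iPφ iPχ]
    congr 1
    funext x
    simp only [hχdef]
    ring
  have hsplitQ : ∫ x, g (Q x) ∂νlim
      = (∫ x, g (Q x) * φ x ∂νlim) + ∫ x, g (Q x) * χ x ∂νlim := by
    rw [← integral_add iQφν iQχν]
    congr 1
    funext x
    simp only [hχdef]
    ring
  -- estimate 1 : uniform closeness on U
  have e1 : |(∫ x, g (P n x) * φ x ∂ν n) - ∫ x, ψ x ∂ν n| ≤ ε/8 := by
    rw [← integral_sub iPφ iψn]
    have hb : ∀ x, ‖g (P n x) * φ x - ψ x‖ ≤ ε/8 := by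
      intro x
      rw [hψx, Real.norm_eq_abs, ← sub_mul]
      by_cases hxU : x ∈ U
      · have hd : dist (g (Q x)) (g (P n x)) < ε/8 := hgη (h1 x (subset_closure hxU))
        rw [abs_mul]
        calc |g (P n x) - g (Q x)| * |φ x| ≤ (ε/8) * 1 := by
              apply mul_le_mul _ (habsφ x) (abs_nonneg _) (by positivity)
              rw [abs_sub_comm]
              exact le_of_lt (by simpa [Real.dist_eq] using hd)
          _ = ε/8 := mul_one _
      · have : φ x = 0 := hφ0 hxU
        rw [this, mul_zero, abs_zero]
        positivity
    calc ‖∫ x, (g (P n x) * φ x - ψ x) ∂ν n‖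
        ≤ (ε/8) * ((ν n) Set.univ).toReal :=
          norm_integral_le_of_norm_le_const (Filter.Eventually.of_forall hb)
      _ = ε/8 := by simp
  -- estimate 2 : weak convergence for ψ
  have e2 : |(∫ x, ψ x ∂ν n) - ∫ x, ψ x ∂νlim| < ε/8 := by
    rw [← Real.dist_eq]; exact h2
  -- estimate 3 : mass near N for ν n
  have iχn : Integrable χ (ν n) := hint χ (ν n) hχcont.measurable fun x => (habsχ x).trans hM1
  have iχν : Integrable χ νlim := hint χ νlim hχcont.measurable fun x => (habsχ x).trans hM1
  have hmulbound : ∀ (f : X → ℝ) (μ : Measure X) [IsProbabilityMeasure μ],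
      Integrable (fun x => f x * χ x) μ → (∀ x, |f x| ≤ M) → Integrable χ μ →
      |∫ x, f x * χ x ∂μ| ≤ M * ∫ x, χ x ∂μ := by
    intro f μ _ hi hfb hiχ
    calc |∫ x, f x * χ x ∂μ| = ‖∫ x, f x * χ x ∂μ‖ := (Real.norm_eq_abs _).symm
      _ ≤ ∫ x, ‖f x * χ x‖ ∂μ := norm_integral_le_integral_norm _
      _ ≤ ∫ x, M * χ x ∂μ := by
          apply integral_mono hi.norm (hiχ.const_mul M)
          intro x
          show ‖f x * χ x‖ ≤ M * χ x
          rw [Real.norm_eq_abs, abs_mul, abs_of_nonneg (hχ01 x).1]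
          exact mul_le_mul_of_nonneg_right (hfb x) (hχ01 x).1
      _ = M * ∫ x, χ x ∂μ := integral_const_mul M χ
  have e3 : |∫ x, g (P n x) * χ x ∂ν n| < ε/8 := by
    have step : |∫ x, g (P n x) * χ x ∂ν n| ≤ M * ∫ x, χ x ∂ν n :=
      hmulbound (fun x => g (P n x)) (ν n) iPχ (fun x => hgb _) iχn
    have h3' : ∫ x, χ x ∂ν n < δ := by simpa [hχcx] using h3
    have : M * ∫ x, χ x ∂ν n < M * δ := by
      exact mul_lt_mul_of_pos_left h3' hM
    have hMδ : M * δ = ε/8 := by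
      rw [hδdef]; field_simp
    exact step.trans_lt (hMδ ▸ this)
  have e4 : |∫ x, g (Q x) * χ x ∂νlim| < ε/8 := by
    have step : |∫ x, g (Q x) * χ x ∂νlim| ≤ M * ∫ x, χ x ∂νlim :=
      hmulbound (fun x => g (Q x)) νlim iQχν (fun x => hgb _) iχν
    have : M * ∫ x, χ x ∂νlim < M * δ := mul_lt_mul_of_pos_left hχν hM
    have hMδ : M * δ = ε/8 := by
      rw [hδdef]; field_simp
    exact step.trans_lt (hMδ ▸ this)
  -- conclude
  rw [hsplitP, hsplitQ, Real.dist_eq]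
  have hCeq : ∫ x, ψ x ∂νlim = ∫ x, g (Q x) * φ x ∂νlim := rfl
  rw [hCeq] at e2
  obtain ⟨l1, r1⟩ := abs_le.mp e1
  obtain ⟨l2, r2⟩ := abs_lt.mp e2
  obtain ⟨l3, r3⟩ := abs_lt.mp e3
  obtain ⟨l4, r4⟩ := abs_lt.mp e4
  rw [abs_lt]
  have hBeq : ∫ x, ψ x ∂ν n = ∫ x, g (Q x) * φ x ∂ν n := rfl
  rw [hBeq] at l1 r1 l2 r2
  constructor <;> linarith
end
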